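/- Let ρ be a bipartite state on ℂ^m ⊗ ℂ^n with blocks ρ_{ij} (the n×n matrices (ρ_{ij})_{kl} = ρ_{(i,k),(j,l)}), and let ρ̃ = Σ_{i,j} E_{ij} ⊗ ρ_{ij} ⊗ E_{ij} be its one-sided pre-measurement state on ℂ^m ⊗ ℂ^n ⊗ ℂ^m. Then the trace norm of the partial transpose of ρ̃ with respect to the third tensor factor equals Σ_{i,j} ‖ρ_{ij}‖₁; hence the negativity of ρ̃ across the cut (first two factors):(third factor) equals (1/2)(Σ_{i,j} ‖ρ_{ij}‖₁ − 1). -/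

import Mathlib

open scoped Kronecker ComplexOrder
open Matrix

/-- The old Mathlib `Matrix.PosSemidef.sqrt`, spelled out. -/
noncomputable def psdSqrtOld {ι : Type*} [Fintype ι] [DecidableEq ι] {A : Matrix ι ι ℂ}
    (hA : A.PosSemidef) : Matrix ι ι ℂ :=
  hA.1.eigenvectorUnitary.1 * diagonal ((↑) ∘ (√·) ∘ hA.1.eigenvalues) *
    (star hA.1.eigenvectorUnitary : Matrix ι ι ℂ)

noncomputable def traceNorm {ι : Type*} [Fintype ι] [DecidableEq ι] (A : Matrix ι ι ℂ) : ℝ :=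
  ((psdSqrtOld (Matrix.posSemidef_conjTranspose_mul_self A)).trace).re

noncomputable def l1Norm {ι κ : Type*} [Fintype ι] [Fintype κ] (A : Matrix ι κ ℂ) : ℝ :=
  ∑ i, ∑ j, ‖A i j‖

def ptranspose {α β : Type*} (ρ : Matrix (α × β) (α × β) ℂ) : Matrix (α × β) (α × β) ℂ :=
  Matrix.of fun p q => ρ (p.1, q.2) (q.1, p.2)

noncomputable def negativity {α β : Type*} [Fintype α] [Fintype β] [DecidableEq α] [DecidableEq β]
    (ρ : Matrix (α × β) (α × β) ℂ) : ℝ :=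
  (traceNorm (ptranspose ρ) - 1) / 2

def matUnit {ι : Type*} [DecidableEq ι] (i j : ι) : Matrix ι ι ℂ :=
  Matrix.single i j 1

noncomputable def mcs {n : ℕ} (t : Fin n → Fin n → ℂ) :
    Matrix (Fin n × Fin n) (Fin n × Fin n) ℂ :=
  ∑ i, ∑ j, t i j • (matUnit i j ⊗ₖ matUnit i j)

def blockOf {m n : ℕ} (ρ : Matrix (Fin m × Fin n) (Fin m × Fin n) ℂ) (i j : Fin m) :
    Matrix (Fin n) (Fin n) ℂ :=
  Matrix.of fun k l => ρ (i, k) (j, l)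

noncomputable def conjU {m n : ℕ} (U : Matrix.unitaryGroup (Fin m) ℂ)
    (ρ : Matrix (Fin m × Fin n) (Fin m × Fin n) ℂ) : Matrix (Fin m × Fin n) (Fin m × Fin n) ℂ :=
  ((U : Matrix (Fin m) (Fin m) ℂ) ⊗ₖ (1 : Matrix (Fin n) (Fin n) ℂ))ᴴ * ρ *
    ((U : Matrix (Fin m) (Fin m) ℂ) ⊗ₖ (1 : Matrix (Fin n) (Fin n) ℂ))

noncomputable def conjUV {m n : ℕ} (U : Matrix.unitaryGroup (Fin m) ℂ)
    (V : Matrix.unitaryGroup (Fin n) ℂ)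
    (ρ : Matrix (Fin m × Fin n) (Fin m × Fin n) ℂ) : Matrix (Fin m × Fin n) (Fin m × Fin n) ℂ :=
  ((U : Matrix (Fin m) (Fin m) ℂ) ⊗ₖ (V : Matrix (Fin n) (Fin n) ℂ))ᴴ * ρ *
    ((U : Matrix (Fin m) (Fin m) ℂ) ⊗ₖ (V : Matrix (Fin n) (Fin n) ℂ))

noncomputable def QNA {m n : ℕ} (ρ : Matrix (Fin m × Fin n) (Fin m × Fin n) ℂ) : ℝ :=
  ⨅ U : Matrix.unitaryGroup (Fin m) ℂ,
    ((∑ i, ∑ j, traceNorm (blockOf (conjU U ρ) i j)) - 1) / 2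

noncomputable def QNAB {m n : ℕ} (ρ : Matrix (Fin m × Fin n) (Fin m × Fin n) ℂ) : ℝ :=
  ⨅ U : Matrix.unitaryGroup (Fin m) ℂ, ⨅ V : Matrix.unitaryGroup (Fin n) ℂ,
    (l1Norm (conjUV U V ρ) - 1) / 2

/-- The one-sided pre-measurement state `ρ̃ = Σ_{i,j} E_{ij} ⊗ ρ_{ij} ⊗ E_{ij}`
on `ℂ^m ⊗ ℂ^n ⊗ ℂ^m`. -/
noncomputable def premeas1 {m n : ℕ} (ρ : Matrix (Fin m × Fin n) (Fin m × Fin n) ℂ) :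
    Matrix ((Fin m × Fin n) × Fin m) ((Fin m × Fin n) × Fin m) ℂ :=
  ∑ i, ∑ j, (matUnit i j ⊗ₖ blockOf ρ i j) ⊗ₖ matUnit i j


open scoped MatrixOrder in
lemma psdSqrtOld_eq {ι : Type*} [Fintype ι] [DecidableEq ι] {A : Matrix ι ι ℂ}
    (hA : A.PosSemidef) : psdSqrtOld hA = CFC.sqrt A := by
  rw [CFC.sqrt_eq_real_sqrt A hA.nonneg, cfcₙ_eq_cfc, hA.1.cfc_eq, IsHermitian.cfc,
    Unitary.conjStarAlgAut_apply]
  rfl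

open scoped MatrixOrder in
lemma psdSqrtOld_posSemidef {ι : Type*} [Fintype ι] [DecidableEq ι] {A : Matrix ι ι ℂ}
    (hA : A.PosSemidef) : (psdSqrtOld hA).PosSemidef := by
  rw [psdSqrtOld_eq]
  exact (CFC.sqrt_nonneg A).posSemidef

open scoped MatrixOrder in
lemma psdSqrtOld_mul_self {ι : Type*} [Fintype ι] [DecidableEq ι] {A : Matrix ι ι ℂ}
    (hA : A.PosSemidef) : psdSqrtOld hA * psdSqrtOld hA = A := by
  rw [psdSqrtOld_eq]
  exact CFC.sqrt_mul_sqrt_self A hA.nonneg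

open scoped MatrixOrder in
lemma psdSqrtOld_eq_of_sq_eq {ι : Type*} [Fintype ι] [DecidableEq ι] {A B : Matrix ι ι ℂ}
    (hB : B.PosSemidef) (hA : A.PosSemidef) (h : B ^ 2 = A) : B = psdSqrtOld hA := by
  rw [psdSqrtOld_eq]
  exact (CFC.sqrt_unique (by rw [← pow_two]; exact h) hB.nonneg).symm

lemma premeas1_apply {m n : ℕ} (ρ : Matrix (Fin m × Fin n) (Fin m × Fin n) ℂ)
    (a a' c c' : Fin m) (b b' : Fin n) :
    premeas1 ρ ((a,b),c) ((a',b'),c') =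
      if c = a ∧ c' = a' then ρ (a,b) (a',b') else 0 := by
  rw [premeas1]
  simp only [Matrix.sum_apply, kroneckerMap_apply, matUnit, single, of_apply, blockOf]
  simp only [ite_mul, one_mul, zero_mul, mul_ite, mul_one, mul_zero]
  rw [Finset.sum_comm]
  simp only [ite_and, Finset.sum_ite_eq, Finset.mem_univ, if_true]
  by_cases h1 : c = a <;> by_cases h2 : c' = a' <;> simp [h1, h2]

lemma ptp_apply {m n : ℕ} (ρ : Matrix (Fin m × Fin n) (Fin m × Fin n) ℂ)
    (a a' c c' : Fin m) (b b' : Fin n) :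
    ptranspose (premeas1 ρ) ((a,b),c) ((a',b'),c') =
      if c' = a ∧ c = a' then ρ (a,b) (a',b') else 0 := by
  have : ptranspose (premeas1 ρ) ((a,b),c) ((a',b'),c') = premeas1 ρ ((a,b),c') ((a',b'),c) := rfl
  rw [this, premeas1_apply]

open scoped MatrixOrder in
lemma posSemidef_blockDiagonal {k o : Type*} [Fintype k] [DecidableEq k] [Fintype o]
    [DecidableEq o] {d : k → Matrix o o ℂ} (h : ∀ i, (d i).PosSemidef) :
    (Matrix.blockDiagonal d).PosSemidef := by
  choose B hB using fun i => CStarAlgebra.nonneg_iff_eq_star_mul_self.mp (h i).nonneg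
  have : d = fun i => (B i)ᴴ * B i := funext hB
  rw [this]
  have e2 : (Matrix.blockDiagonal fun i => (B i)ᴴ * B i)
      = (Matrix.blockDiagonal B)ᴴ * Matrix.blockDiagonal B := by
    rw [Matrix.blockDiagonal_conjTranspose, ← Matrix.blockDiagonal_mul]
  rw [e2]
  exact Matrix.posSemidef_conjTranspose_mul_self _

noncomputable def sqrtBlocks {m n : ℕ} (ρ : Matrix (Fin m × Fin n) (Fin m × Fin n) ℂ) :
    Matrix ((Fin m × Fin n) × Fin m) ((Fin m × Fin n) × Fin m) ℂ :=
  (Matrix.blockDiagonal fun p : Fin m × Fin m =>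
     psdSqrtOld (Matrix.posSemidef_conjTranspose_mul_self (blockOf ρ p.1 p.2))).submatrix
    (fun q => (q.1.2, (q.2, q.1.1))) (fun q => (q.1.2, (q.2, q.1.1)))

lemma sqrtBlocks_posSemidef {m n : ℕ} (ρ : Matrix (Fin m × Fin n) (Fin m × Fin n) ℂ) :
    (sqrtBlocks ρ).PosSemidef :=
  (posSemidef_blockDiagonal fun _ => psdSqrtOld_posSemidef _).submatrix _

lemma sqrtBlocks_apply {m n : ℕ} (ρ : Matrix (Fin m × Fin n) (Fin m × Fin n) ℂ)
    (a a' c c' : Fin m) (b b' : Fin n) :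
    sqrtBlocks ρ ((a,b),c) ((a',b'),c') =
      if c = c' ∧ a = a' then
        psdSqrtOld (Matrix.posSemidef_conjTranspose_mul_self (blockOf ρ c a)) b b' else 0 := by
  simp only [sqrtBlocks, submatrix_apply, blockDiagonal_apply, Prod.mk.injEq]

lemma sum_ite_const {α : Type*} [Fintype α] (p : Prop) [Decidable p] (f : α → ℂ) :
    (∑ x, if p then f x else 0) = if p then ∑ x, f x else 0 := by
  split <;> simp

lemma sq_sqrtBlocks {m n : ℕ} (ρ : Matrix (Fin m × Fin n) (Fin m × Fin n) ℂ) :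
    sqrtBlocks ρ ^ 2 = (ptranspose (premeas1 ρ))ᴴ * ptranspose (premeas1 ρ) := by
  ext ⟨⟨a,b⟩,c⟩ ⟨⟨a',b'⟩,c'⟩
  rw [pow_two, Matrix.mul_apply, Matrix.mul_apply]
  simp only [Fintype.sum_prod_type]
  simp only [sqrtBlocks_apply, ptp_apply, conjTranspose_apply, apply_ite (star : ℂ → ℂ),
    star_zero, ite_mul, zero_mul, mul_ite, mul_zero, ite_and]
  simp only [sum_ite_const, Finset.sum_ite_eq, Finset.sum_ite_eq', Finset.mem_univ, if_true]
  by_cases h1 : c = c' <;> by_cases h2 : a = a'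
  · subst h1; subst h2
    simp only [if_true]
    have h := congrFun (congrFun (psdSqrtOld_mul_self
      (Matrix.posSemidef_conjTranspose_mul_self (blockOf ρ c a))) b) b'
    rw [Matrix.mul_apply, Matrix.mul_apply] at h
    simpa [blockOf, conjTranspose_apply] using h
  · simp [h1, h2, Ne.symm h2, eq_comm (a := a')]
  · simp [h1]
  · simp [h1]

lemma sqrt_ptp_eq {m n : ℕ} (ρ : Matrix (Fin m × Fin n) (Fin m × Fin n) ℂ) :
    psdSqrtOld (Matrix.posSemidef_conjTranspose_mul_self (ptranspose (premeas1 ρ))) = sqrtBlocks ρ :=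
  (psdSqrtOld_eq_of_sq_eq (sqrtBlocks_posSemidef ρ)
    (Matrix.posSemidef_conjTranspose_mul_self (ptranspose (premeas1 ρ))) (sq_sqrtBlocks ρ)).symm

lemma trace_sqrtBlocks {m n : ℕ} (ρ : Matrix (Fin m × Fin n) (Fin m × Fin n) ℂ) :
    (sqrtBlocks ρ).trace =
      ∑ i, ∑ j, (psdSqrtOld (Matrix.posSemidef_conjTranspose_mul_self (blockOf ρ i j))).trace := by
  simp only [Matrix.trace, Matrix.diag, Fintype.sum_prod_type, sqrtBlocks_apply, and_self,
    if_true]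
  calc (∑ a : Fin m, ∑ b : Fin n, ∑ c : Fin m,
        psdSqrtOld (Matrix.posSemidef_conjTranspose_mul_self (blockOf ρ c a)) b b)
      = ∑ a : Fin m, ∑ c : Fin m, ∑ b : Fin n,
        psdSqrtOld (Matrix.posSemidef_conjTranspose_mul_self (blockOf ρ c a)) b b :=
        Finset.sum_congr rfl fun a _ => Finset.sum_comm
    _ = ∑ c : Fin m, ∑ a : Fin m, ∑ b : Fin n,
        psdSqrtOld (Matrix.posSemidef_conjTranspose_mul_self (blockOf ρ c a)) b b :=
        Finset.sum_comm

theorem stmt_3' {m n : ℕ} (ρ : Matrix (Fin m × Fin n) (Fin m × Fin n) ℂ) :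
    traceNorm (ptranspose (premeas1 ρ)) = ∑ i, ∑ j, traceNorm (blockOf ρ i j) := by
  rw [traceNorm, sqrt_ptp_eq, trace_sqrtBlocks]
  simp [traceNorm, Complex.re_sum]

/-- the trace norm of the partial transpose (w.r.t. the third factor)
of the one-sided pre-measurement state equals `Σ_{i,j} ‖ρ_{ij}‖₁`; hence its
negativity across the cut (first two factors):(third factor) is
`(1/2)(Σ_{i,j} ‖ρ_{ij}‖₁ − 1)`. -/
theorem stmt_3 {m n : ℕ} (ρ : Matrix (Fin m × Fin n) (Fin m × Fin n) ℂ)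
    (hpos : ρ.PosSemidef) (htr : ρ.trace = 1) :
    traceNorm (ptranspose (premeas1 ρ)) = ∑ i, ∑ j, traceNorm (blockOf ρ i j) ∧
    negativity (premeas1 ρ) = (1/2) * ((∑ i, ∑ j, traceNorm (blockOf ρ i j)) - 1) := by
  refine ⟨stmt_3' ρ, ?_⟩
  rw [negativity, stmt_3' ρ]
  ring
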